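/- Let n ≥ 3, and set u := a_n and v := b_n^{-1} · T_{1,2} in SL_n(ℤ). Then (u v u^{-1}) · v^{-1} · (u v^{-1} u^{-1}) · v^{-1} · (u v u^{-1}) · v = b_n. -/
import Mathlib


open Matrix

/-- The `n × n` integer matrix unit `E_{i,j}`, with 1-based indices `i, j ∈ {1, …, n}`:
its `(r,s)` entry (0-based) is `1` when `r + 1 = i` and `s + 1 = j`, and `0` otherwise. -/
def matUnit (n i j : ℕ) : Matrix (Fin n) (Fin n) ℤ :=
  Matrix.of fun r s => if r.val + 1 = i ∧ s.val + 1 = j then 1 else 0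

/-- The elementary transvection `T_{i,j} = I_n + E_{i,j}` (1-based indices). -/
def Tmat (n i j : ℕ) : Matrix (Fin n) (Fin n) ℤ :=
  1 + matUnit n i j

/-- The sign `ε_n = (-1)^(n-1)`. -/
def eps (n : ℕ) : ℤ := (-1) ^ (n - 1)

/-- `a_n = Σ_{i=1}^{n-1} E_{i,i+1} + ε_n E_{n,1}`. -/
def aMat (n : ℕ) : Matrix (Fin n) (Fin n) ℤ :=
  (∑ i ∈ Finset.range (n - 1), matUnit n (i + 1) (i + 2)) + eps n • matUnit n n 1

/-- `b_n = I_n + E_{2,1}`. -/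
def bMat (n : ℕ) : Matrix (Fin n) (Fin n) ℤ :=
  1 + matUnit n 2 1

lemma matUnit_mul (n i j k l : ℕ) :
    matUnit n i j * matUnit n k l =
      if j = k ∧ 1 ≤ j ∧ j ≤ n then matUnit n i l else 0 := by
  by_cases h : j = k ∧ 1 ≤ j ∧ j ≤ n
  · rw [if_pos h]
    obtain ⟨rfl, hj1, hjn⟩ := h
    ext r s
    rw [Matrix.mul_apply]
    rw [Finset.sum_eq_single (⟨j - 1, by omega⟩ : Fin n)]
    · simp only [matUnit, Matrix.of_apply]
      have hj : j - 1 + 1 = j := by omega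
      by_cases h1 : r.val + 1 = i <;> by_cases h2 : s.val + 1 = l <;>
        simp [h1, h2, hj]
    · intro t _ htne
      have hne : t.val + 1 ≠ j := by
        intro hc
        apply htne
        apply Fin.ext
        simp only []
        omega
      simp [matUnit, hne]
    · intro h'; exact absurd (Finset.mem_univ _) h'
  · rw [if_neg h]
    ext r s
    rw [Matrix.mul_apply]
    apply Finset.sum_eq_zero
    intro t _
    simp only [matUnit, Matrix.of_apply, Matrix.zero_apply]
    have ht := t.isLt
    by_cases h1 : t.val + 1 = j
    · by_cases h2 : t.val + 1 = k
      · exact absurd ⟨by omega, by omega, by omega⟩ h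
      · simp [h2]
    · simp [h1]

lemma one_eq_sum (n : ℕ) :
    (1 : Matrix (Fin n) (Fin n) ℤ) = ∑ i ∈ Finset.range n, matUnit n (i+1) (i+1) := by
  ext r s
  rw [Matrix.sum_apply]
  by_cases h : r = s
  · subst h
    rw [Matrix.one_apply_eq]
    rw [Finset.sum_eq_single r.val]
    · simp [matUnit]
    · intro t _ htne
      simp only [matUnit, Matrix.of_apply]
      rw [if_neg (by omega)]
    · intro h'; exact absurd (Finset.mem_range.mpr r.isLt) h'
  · rw [Matrix.one_apply_ne h]
    symm
    apply Finset.sum_eq_zero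
    intro t _
    have hv : r.val ≠ s.val := by simpa [Fin.ext_iff] using h
    simp only [matUnit, Matrix.of_apply]
    rw [if_neg (by omega)]

def aInvM (n : ℕ) : Matrix (Fin n) (Fin n) ℤ :=
  (∑ i ∈ Finset.range (n - 1), matUnit n (i + 2) (i + 1)) + eps n • matUnit n 1 n

lemma eps_mul_eps (n : ℕ) : eps n * eps n = 1 := by
  rw [eps, ← pow_add]
  exact Even.neg_one_pow ⟨n - 1, rfl⟩

lemma aMat_mul_matUnit_one (n : ℕ) (hn : 1 ≤ n) (l : ℕ) :
    aMat n * matUnit n 1 l = eps n • matUnit n n l := by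
  have h0 : ∑ i ∈ Finset.range (n - 1), matUnit n (i + 1) (i + 2) * matUnit n 1 l = 0 := by
    apply Finset.sum_eq_zero; intro i _
    rw [matUnit_mul, if_neg (by omega)]
  rw [aMat, add_mul, Finset.sum_mul, h0, zero_add, smul_mul_assoc, matUnit_mul,
    if_pos ⟨rfl, le_refl 1, hn⟩]

lemma aMat_mul_matUnit_two (n : ℕ) (hn : 2 ≤ n) (l : ℕ) :
    aMat n * matUnit n 2 l = matUnit n 1 l := by
  have h0 : ∑ i ∈ Finset.range (n - 1), matUnit n (i + 1) (i + 2) * matUnit n 2 l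
      = matUnit n 1 l := by
    rw [Finset.sum_eq_single 0]
    · rw [matUnit_mul, if_pos ⟨rfl, by omega, hn⟩]
    · intro i _ hine
      rw [matUnit_mul, if_neg (by omega)]
    · intro h; exact absurd (Finset.mem_range.mpr (by omega)) h
  rw [aMat, add_mul, Finset.sum_mul, h0, smul_mul_assoc, matUnit_mul,
    if_neg (by omega), smul_zero, add_zero]

lemma matUnit_mul_aInv_one (n : ℕ) (hn : 1 ≤ n) (i : ℕ) :
    matUnit n i 1 * aInvM n = eps n • matUnit n i n := by
  have h0 : ∑ j ∈ Finset.range (n - 1), matUnit n i 1 * matUnit n (j + 2) (j + 1) = 0 := by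
    apply Finset.sum_eq_zero; intro j _
    rw [matUnit_mul, if_neg (by omega)]
  rw [aInvM, mul_add, Finset.mul_sum, h0, zero_add, mul_smul_comm, matUnit_mul,
    if_pos ⟨rfl, le_refl 1, hn⟩]

lemma matUnit_mul_aInv_two (n : ℕ) (hn : 2 ≤ n) (i : ℕ) :
    matUnit n i 2 * aInvM n = matUnit n i 1 := by
  have h0 : ∑ j ∈ Finset.range (n - 1), matUnit n i 2 * matUnit n (j + 2) (j + 1)
      = matUnit n i 1 := by
    rw [Finset.sum_eq_single 0]
    · rw [matUnit_mul, if_pos ⟨rfl, by omega, hn⟩]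
    · intro j _ hjne
      rw [matUnit_mul, if_neg (by omega)]
    · intro h; exact absurd (Finset.mem_range.mpr (by omega)) h
  rw [aInvM, mul_add, Finset.mul_sum, h0, mul_smul_comm, matUnit_mul,
    if_neg (by omega), smul_zero, add_zero]

lemma aMat_mul_aInv (n : ℕ) (hn : 1 ≤ n) : aMat n * aInvM n = 1 := by
  have hSS : (∑ i ∈ Finset.range (n - 1), matUnit n (i + 1) (i + 2)) *
      (∑ j ∈ Finset.range (n - 1), matUnit n (j + 2) (j + 1)) =
      ∑ i ∈ Finset.range (n - 1), matUnit n (i + 1) (i + 1) := by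
    rw [Finset.sum_mul]
    apply Finset.sum_congr rfl
    intro i hi
    have hi' : i < n - 1 := Finset.mem_range.mp hi
    rw [Finset.mul_sum, Finset.sum_eq_single i]
    · rw [matUnit_mul, if_pos ⟨rfl, by omega, by omega⟩]
    · intro j _ hjne
      rw [matUnit_mul, if_neg (by omega)]
    · intro h; exact absurd hi h
  have hSM : (∑ i ∈ Finset.range (n - 1), matUnit n (i + 1) (i + 2)) *
      (eps n • matUnit n 1 n) = 0 := by
    rw [Finset.sum_mul]
    apply Finset.sum_eq_zero; intro i _
    rw [mul_smul_comm, matUnit_mul, if_neg (by omega), smul_zero]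
  have hMS : (eps n • matUnit n n 1) *
      (∑ j ∈ Finset.range (n - 1), matUnit n (j + 2) (j + 1)) = 0 := by
    rw [Finset.mul_sum]
    apply Finset.sum_eq_zero; intro j _
    rw [smul_mul_assoc, matUnit_mul, if_neg (by omega), smul_zero]
  have hMM : (eps n • matUnit n n 1) * (eps n • matUnit n 1 n) = matUnit n n n := by
    rw [smul_mul_smul_comm, eps_mul_eps, one_smul, matUnit_mul,
      if_pos ⟨rfl, le_refl 1, hn⟩]
  rw [aMat, aInvM, add_mul, mul_add, mul_add, hSS, hSM, hMS, hMM, add_zero, zero_add]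
  have hrange : Finset.range n = Finset.range (n - 1 + 1) := by rw [Nat.sub_add_cancel hn]
  rw [one_eq_sum n, hrange, Finset.sum_range_succ, Nat.sub_add_cancel hn]

lemma bMat_inv (n : ℕ) : (bMat n)⁻¹ = 1 - matUnit n 2 1 := by
  apply Matrix.inv_eq_right_inv
  rw [bMat, add_mul, mul_sub, mul_sub, mul_one, mul_one, one_mul, matUnit_mul,
    if_neg (by omega)]
  abel

lemma v_eq (n : ℕ) (hn : 2 ≤ n) :
    (bMat n)⁻¹ * Tmat n 1 2 = 1 + matUnit n 1 2 - matUnit n 2 1 - matUnit n 2 2 := by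
  rw [bMat_inv n, Tmat, sub_mul, mul_add, mul_add, one_mul, one_mul, mul_one,
    matUnit_mul, if_pos ⟨rfl, le_refl 1, by omega⟩]
  abel

lemma v_inv (n : ℕ) (hn : 2 ≤ n) :
    ((bMat n)⁻¹ * Tmat n 1 2)⁻¹ = 1 - matUnit n 1 1 - matUnit n 1 2 + matUnit n 2 1 := by
  apply Matrix.inv_eq_right_inv
  rw [v_eq n hn]
  have h1 : (1:ℕ) ≤ n := by omega
  simp only [mul_sub, sub_mul, mul_add, add_mul, mul_one, one_mul, matUnit_mul, hn, h1]
  norm_num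
  abel

lemma conj_v (n : ℕ) (hn : 3 ≤ n) :
    aMat n * (1 + matUnit n 1 2 - matUnit n 2 1 - matUnit n 2 2) * aInvM n =
      1 + eps n • matUnit n n 1 - eps n • matUnit n 1 n - matUnit n 1 1 := by
  have h1 : (1:ℕ) ≤ n := by omega
  have h2 : (2:ℕ) ≤ n := by omega
  simp only [mul_add, mul_sub, mul_one, add_mul, sub_mul, smul_mul_assoc,
    aMat_mul_matUnit_one n h1, aMat_mul_matUnit_two n h2,
    matUnit_mul_aInv_one n h1, matUnit_mul_aInv_two n h2,
    aMat_mul_aInv n h1, smul_smul, eps_mul_eps, one_smul]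

lemma conj_w (n : ℕ) (hn : 3 ≤ n) :
    aMat n * (1 - matUnit n 1 1 - matUnit n 1 2 + matUnit n 2 1) * aInvM n =
      1 - matUnit n n n - eps n • matUnit n n 1 + eps n • matUnit n 1 n := by
  have h1 : (1:ℕ) ≤ n := by omega
  have h2 : (2:ℕ) ≤ n := by omega
  simp only [mul_add, mul_sub, mul_one, add_mul, sub_mul, smul_mul_assoc,
    aMat_mul_matUnit_one n h1, aMat_mul_matUnit_two n h2,
    matUnit_mul_aInv_one n h1, matUnit_mul_aInv_two n h2,
    aMat_mul_aInv n h1, smul_smul, eps_mul_eps, one_smul]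

set_option maxHeartbeats 1000000 in
lemma final_word (n : ℕ) (hn : 3 ≤ n) :
    (1 + eps n • matUnit n n 1 - eps n • matUnit n 1 n - matUnit n 1 1) *
      (1 - matUnit n 1 1 - matUnit n 1 2 + matUnit n 2 1) *
      (1 - matUnit n n n - eps n • matUnit n n 1 + eps n • matUnit n 1 n) *
      (1 - matUnit n 1 1 - matUnit n 1 2 + matUnit n 2 1) *
      (1 + eps n • matUnit n n 1 - eps n • matUnit n 1 n - matUnit n 1 1) *
      (1 + matUnit n 1 2 - matUnit n 2 1 - matUnit n 2 2) = bMat n := by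
  have h1 : (1:ℕ) ≤ n := by omega
  have h2 : (2:ℕ) ≤ n := by omega
  have h1n : (1:ℕ) ≠ n := by omega
  have h2n : (2:ℕ) ≠ n := by omega
  have hn1 : n ≠ 1 := by omega
  have hn2 : n ≠ 2 := by omega
  have s1 : (1 + eps n • matUnit n n 1 - eps n • matUnit n 1 n - matUnit n 1 1) *
      (1 - matUnit n 1 1 - matUnit n 1 2 + matUnit n 2 1) =
      1 - matUnit n 1 1 - eps n • matUnit n 1 n + matUnit n 2 1 - eps n • matUnit n n 2 := by
    simp only [mul_add, mul_sub, add_mul, sub_mul, mul_one, one_mul, smul_mul_assoc,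
      mul_smul_comm, smul_smul, eps_mul_eps, one_smul, matUnit_mul,
      h1, h2, h1n, h2n, hn1, hn2, ne_eq, not_false_eq_true, le_refl, eq_self_iff_true,
      true_and, and_true, false_and, and_false, if_true, if_false,
      smul_zero, mul_zero, zero_mul, add_zero, zero_add, sub_zero, zero_sub,
      smul_add, smul_sub]
    norm_num
    abel
  have s2 : (1 - matUnit n 1 1 - eps n • matUnit n 1 n + matUnit n 2 1 - eps n • matUnit n n 2) *
      (1 - matUnit n n n - eps n • matUnit n n 1 + eps n • matUnit n 1 n) =
      1 + matUnit n 2 1 + eps n • matUnit n 2 n - eps n • matUnit n n 1 -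
        eps n • matUnit n n 2 - matUnit n n n := by
    simp only [mul_add, mul_sub, add_mul, sub_mul, mul_one, one_mul, smul_mul_assoc,
      mul_smul_comm, smul_smul, eps_mul_eps, one_smul, matUnit_mul,
      h1, h2, h1n, h2n, hn1, hn2, ne_eq, not_false_eq_true, le_refl, eq_self_iff_true,
      true_and, and_true, false_and, and_false, if_true, if_false,
      smul_zero, mul_zero, zero_mul, add_zero, zero_add, sub_zero, zero_sub,
      smul_add, smul_sub]
    norm_num
    abel
  have s3 : (1 + matUnit n 2 1 + eps n • matUnit n 2 n - eps n • matUnit n n 1 -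
        eps n • matUnit n n 2 - matUnit n n n) *
      (1 - matUnit n 1 1 - matUnit n 1 2 + matUnit n 2 1) =
      1 - matUnit n 1 1 - matUnit n 1 2 + matUnit n 2 1 - matUnit n 2 2 +
        eps n • matUnit n 2 n - eps n • matUnit n n 1 - matUnit n n n := by
    simp only [mul_add, mul_sub, add_mul, sub_mul, mul_one, one_mul, smul_mul_assoc,
      mul_smul_comm, smul_smul, eps_mul_eps, one_smul, matUnit_mul,
      h1, h2, h1n, h2n, hn1, hn2, ne_eq, not_false_eq_true, le_refl, eq_self_iff_true,
      true_and, and_true, false_and, and_false, if_true, if_false,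
      smul_zero, mul_zero, zero_mul, add_zero, zero_add, sub_zero, zero_sub,
      smul_add, smul_sub]
    norm_num
    abel
  have s4 : (1 - matUnit n 1 1 - matUnit n 1 2 + matUnit n 2 1 - matUnit n 2 2 +
        eps n • matUnit n 2 n - eps n • matUnit n n 1 - matUnit n n n) *
      (1 + eps n • matUnit n n 1 - eps n • matUnit n 1 n - matUnit n 1 1) =
      1 - matUnit n 1 1 - matUnit n 1 2 + matUnit n 2 1 - matUnit n 2 2 := by
    simp only [mul_add, mul_sub, add_mul, sub_mul, mul_one, one_mul, smul_mul_assoc,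
      mul_smul_comm, smul_smul, eps_mul_eps, one_smul, matUnit_mul,
      h1, h2, h1n, h2n, hn1, hn2, ne_eq, not_false_eq_true, le_refl, eq_self_iff_true,
      true_and, and_true, false_and, and_false, if_true, if_false,
      smul_zero, mul_zero, zero_mul, add_zero, zero_add, sub_zero, zero_sub,
      smul_add, smul_sub]
    norm_num
    abel
  have s5 : (1 - matUnit n 1 1 - matUnit n 1 2 + matUnit n 2 1 - matUnit n 2 2) *
      (1 + matUnit n 1 2 - matUnit n 2 1 - matUnit n 2 2) = bMat n := by
    rw [bMat]
    simp only [mul_add, mul_sub, add_mul, sub_mul, mul_one, one_mul, smul_mul_assoc,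
      mul_smul_comm, smul_smul, eps_mul_eps, one_smul, matUnit_mul,
      h1, h2, h1n, h2n, hn1, hn2, ne_eq, not_false_eq_true, le_refl, eq_self_iff_true,
      true_and, and_true, false_and, and_false, if_true, if_false,
      smul_zero, mul_zero, zero_mul, add_zero, zero_add, sub_zero, zero_sub,
      smul_add, smul_sub]
    norm_num
    abel
  rw [s1, s2, s3, s4, s5]

/-- For `n ≥ 3`, with `u = a_n` and `v = b_n⁻¹ · T_{1,2}` in `SL_n(ℤ)`,
one has `(u v u⁻¹) · v⁻¹ · (u v⁻¹ u⁻¹) · v⁻¹ · (u v u⁻¹) · v = b_n`. -/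
theorem word_recovers_bMat (n : ℕ) (hn : 3 ≤ n)
    (u v : Matrix (Fin n) (Fin n) ℤ)
    (hu : u = aMat n) (hv : v = (bMat n)⁻¹ * Tmat n 1 2) :
    (u * v * u⁻¹) * v⁻¹ * (u * v⁻¹ * u⁻¹) * v⁻¹ * (u * v * u⁻¹) * v = bMat n := by
  have h1 : (1:ℕ) ≤ n := by omega
  have h2 : (2:ℕ) ≤ n := by omega
  have hv' : v = 1 + matUnit n 1 2 - matUnit n 2 1 - matUnit n 2 2 := by
    rw [hv, v_eq n h2]
  have hvinv : v⁻¹ = 1 - matUnit n 1 1 - matUnit n 1 2 + matUnit n 2 1 := by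
    rw [hv, v_inv n h2]
  have huinv : u⁻¹ = aInvM n := by
    rw [hu]; exact Matrix.inv_eq_right_inv (aMat_mul_aInv n h1)
  rw [hvinv, hv', huinv, hu, conj_v n hn, conj_w n hn, final_word n hn]
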